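/- Let d ≥ 1 and let x₀, x₁, v₀, v₁ ∈ ℝ^d. Then the infimum of ∫₀¹ ‖X''(t)‖² dt over all twice continuously differentiable curves X : [0,1] → ℝ^d with X(0) = x₀, X(1) = x₁, X'(0) = v₀, X'(1) = v₁ equals c(x₀,x₁,v₀,v₁), and this infimum is attained. In particular, every such admissible curve X satisfies ∫₀¹ ‖X''(t)‖² dt ≥ c(x₀,x₁,v₀,v₁). -/

import Mathlib

open MeasureTheory

noncomputable section

section Aux

variable {E : Type*} [NormedAddCommGroup E] [InnerProductSpace ℝ E]

/-- Integration by parts: the integral of `⟪2a + 6tb, X''(t)⟫` depends only on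
the boundary data of `X`. -/
lemma splineKey (a b : E) (X : ℝ → E) (hX : ContDiff ℝ 2 X) :
    ∫ t in (0:ℝ)..1, (inner ℝ ((2:ℝ) • a + (6*t) • b) (deriv (deriv X) t) : ℝ)
      = 2 * (inner ℝ a (deriv X 1 - deriv X 0) : ℝ)
        + 6 * (inner ℝ b (deriv X 1 - X 1 + X 0) : ℝ) := by
  rw [show (2 : WithTop ℕ∞) = 1 + 1 from rfl, contDiff_succ_iff_deriv] at hX
  obtain ⟨hX1, -, hX2⟩ := hX
  obtain ⟨hX2d, hX2c⟩ := contDiff_one_iff_deriv.mp hX2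
  have hd1 : ∀ t, HasDerivAt X (deriv X t) t := fun t => (hX1 t).hasDerivAt
  have hd2 : ∀ t, HasDerivAt (deriv X) (deriv (deriv X) t) t := fun t => (hX2d t).hasDerivAt
  set F : ℝ → ℝ := fun t =>
    2 * (inner ℝ a (deriv X t) : ℝ) + 6 * (t * (inner ℝ b (deriv X t) : ℝ) - (inner ℝ b (X t) : ℝ))
  have hF : ∀ t, HasDerivAt F
      ((inner ℝ ((2:ℝ) • a + (6*t) • b) (deriv (deriv X) t) : ℝ)) t := by
    intro t
    have h1 : HasDerivAt (fun s => (inner ℝ a (deriv X s) : ℝ))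
        (inner ℝ a (deriv (deriv X) t) : ℝ) t := by
      simpa using (hasDerivAt_const t a).inner ℝ (hd2 t)
    have h2 : HasDerivAt (fun s => (inner ℝ b (deriv X s) : ℝ))
        (inner ℝ b (deriv (deriv X) t) : ℝ) t := by
      simpa using (hasDerivAt_const t b).inner ℝ (hd2 t)
    have h3 : HasDerivAt (fun s => (inner ℝ b (X s) : ℝ)) (inner ℝ b (deriv X t) : ℝ) t := by
      simpa using (hasDerivAt_const t b).inner ℝ (hd1 t)
    have h4 : HasDerivAt (fun s => s * (inner ℝ b (deriv X s) : ℝ))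
        (1 * (inner ℝ b (deriv X t) : ℝ) + t * (inner ℝ b (deriv (deriv X) t) : ℝ)) t :=
      (hasDerivAt_id t).mul h2
    have := ((h1.const_mul 2).add (((h4.sub h3)).const_mul 6))
    refine this.congr_deriv ?_
    simp [inner_add_left, inner_smul_left]
    ring
  have hcont : Continuous fun t =>
      (inner ℝ ((2:ℝ) • a + (6*t) • b) (deriv (deriv X) t) : ℝ) :=
    Continuous.inner (by continuity) hX2c
  rw [intervalIntegral.integral_eq_sub_of_hasDerivAt (f := F)
    (fun t _ => hF t) (hcont.intervalIntegrable 0 1)]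
  simp only [F, mul_one, one_mul, mul_zero, zero_mul, inner_sub_right, inner_add_right]
  ring

/-- Derivative facts for the cubic spline `t ↦ x₀ + t v₀ + t² a + t³ b`. -/
lemma spline_facts (x₀ v₀ a b : E) :
    ContDiff ℝ 2 (fun t : ℝ => x₀ + t • v₀ + (t^2) • a + (t^3) • b) ∧
    (deriv (fun t : ℝ => x₀ + t • v₀ + (t^2) • a + (t^3) • b)
      = fun t => v₀ + (2*t) • a + (3*t^2) • b) ∧
    (∀ t, deriv (deriv (fun t : ℝ => x₀ + t • v₀ + (t^2) • a + (t^3) • b)) t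
      = (2:ℝ) • a + (6*t) • b) := by
  set S : ℝ → E := fun t => x₀ + t • v₀ + (t^2) • a + (t^3) • b with hSdef
  have hS1 : ∀ t, HasDerivAt S (v₀ + (2*t) • a + (3*t^2) • b) t := by
    intro t
    have h0 : HasDerivAt (fun s : ℝ => x₀ + s • v₀) ((1:ℝ) • v₀) t := by
      simpa using ((hasDerivAt_id t).smul_const v₀).const_add x₀
    have h1 : HasDerivAt (fun s : ℝ => (s^2) • a) (((2:ℕ) * t ^ (2-1) : ℝ) • a) t :=
      (hasDerivAt_pow 2 t).smul_const a
    have h2 : HasDerivAt (fun s : ℝ => (s^3) • b) (((3:ℕ) * t ^ (3-1) : ℝ) • b) t :=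
      (hasDerivAt_pow 3 t).smul_const b
    have h := (h0.add h1).add h2
    convert h using 1
    · rfl
    norm_num
  have hd : deriv S = fun t => v₀ + (2*t) • a + (3*t^2) • b := funext fun t => (hS1 t).deriv
  have hS2 : ∀ t, HasDerivAt (fun s : ℝ => v₀ + (2*s) • a + (3*s^2) • b)
      ((2:ℝ) • a + (6*t) • b) t := by
    intro t
    have ha : HasDerivAt (fun s : ℝ => (2*s) • a) ((2:ℝ) • a) t := by
      simpa using ((hasDerivAt_id t).const_mul 2).smul_const a
    have hb : HasDerivAt (fun s : ℝ => (3*s^2) • b) ((6*t) • b) t := by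
      have h := (((hasDerivAt_pow 2 t).const_mul 3).smul_const b)
      convert h using 1
      norm_num
      module
    have h := ((hasDerivAt_const t v₀).add ha).add hb
    convert h using 1
    · rfl
    abel
  have hd2 : ∀ t, deriv (deriv S) t = (2:ℝ) • a + (6*t) • b := by
    intro t; rw [hd]; exact (hS2 t).deriv
  refine ⟨?_, hd, hd2⟩
  apply ContDiff.add; apply ContDiff.add; apply ContDiff.add
  · exact contDiff_const
  · exact contDiff_id.smul contDiff_const
  · exact (contDiff_id.pow 2).smul contDiff_const
  · exact (contDiff_id.pow 3).smul contDiff_const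

/-- The algebraic identity identifying the boundary expression with the cost. -/
lemma spline_alg (p q : E) :
    2 * (inner ℝ ((3:ℝ) • p - q) q : ℝ) + 6 * (inner ℝ (q - (2:ℝ) • p) (q - p) : ℝ)
      = 12 * ‖p‖ ^ 2 - 12 * (inner ℝ p q : ℝ) + 4 * ‖q‖ ^ 2 := by
  rw [← real_inner_self_eq_norm_sq, ← real_inner_self_eq_norm_sq]
  simp only [inner_sub_left, inner_sub_right, real_inner_smul_left, real_inner_smul_right,
    real_inner_comm q p]
  ring

end Aux

/-- The cost `c(x, x', v, v') = 12‖x'−x−v‖² − 12⟨x'−x−v, v'−v⟩ + 4‖v'−v‖²`. -/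
def splineCost {d : ℕ} (x x' v v' : EuclideanSpace ℝ (Fin d)) : ℝ :=
  12 * ‖x' - x - v‖ ^ 2 - 12 * (inner ℝ (x' - x - v) (v' - v) : ℝ) + 4 * ‖v' - v‖ ^ 2

/-- The infimum of `∫₀¹ ‖X''‖²` over C² curves with prescribed endpoint positions and
velocities equals `c(x₀,x₁,v₀,v₁)`, and it is attained; in particular every admissible
curve has energy at least `c(x₀,x₁,v₀,v₁)`. -/
theorem stmt0 (d : ℕ) (hd : 1 ≤ d) (x₀ x₁ v₀ v₁ : EuclideanSpace ℝ (Fin d)) :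
    IsLeast { y : ℝ | ∃ X : ℝ → EuclideanSpace ℝ (Fin d), ContDiff ℝ 2 X ∧
        X 0 = x₀ ∧ X 1 = x₁ ∧ deriv X 0 = v₀ ∧ deriv X 1 = v₁ ∧
        y = ∫ t in (0:ℝ)..1, ‖deriv (deriv X) t‖ ^ 2 }
      (splineCost x₀ x₁ v₀ v₁) := by
  set p : EuclideanSpace ℝ (Fin d) := x₁ - x₀ - v₀ with hp
  set q : EuclideanSpace ℝ (Fin d) := v₁ - v₀ with hq
  set a : EuclideanSpace ℝ (Fin d) := (3:ℝ) • p - q with ha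
  set b : EuclideanSpace ℝ (Fin d) := q - (2:ℝ) • p with hb
  set S : ℝ → EuclideanSpace ℝ (Fin d) := fun t => x₀ + t • v₀ + (t^2) • a + (t^3) • b with hS
  obtain ⟨hCS, hSd, hSd2⟩ := spline_facts x₀ v₀ a b
  -- boundary values of the spline
  have hS0 : S 0 = x₀ := by simp [hS]
  have hS1 : S 1 = x₁ := by
    simp only [hS, one_smul, one_pow]
    rw [ha, hb, hp]
    module
  have hSd0 : deriv S 0 = v₀ := by rw [hSd]; simp
  have hSd1 : deriv S 1 = v₁ := by
    rw [hSd]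
    simp only [mul_one, one_pow]
    rw [ha, hb, hq]
    module
  have hqp : v₁ - x₁ + x₀ = q - p := by rw [hq, hp]; module
  -- the common value of the boundary expression
  have halg : 2 * (inner ℝ a (v₁ - v₀) : ℝ) + 6 * (inner ℝ b (v₁ - x₁ + x₀) : ℝ)
      = splineCost x₀ x₁ v₀ v₁ := by
    rw [hqp, ← hq, ha, hb, splineCost, ← hp, ← hq]
    exact spline_alg p q
  -- energy of the spline equals the cost
  have hSenergy : (∫ t in (0:ℝ)..1, ‖deriv (deriv S) t‖ ^ 2) = splineCost x₀ x₁ v₀ v₁ := by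
    have heq : ∀ t : ℝ, ‖deriv (deriv S) t‖ ^ 2
        = (inner ℝ ((2:ℝ) • a + (6*t) • b) (deriv (deriv S) t) : ℝ) := by
      intro t
      rw [hSd2 t, real_inner_self_eq_norm_sq]
    simp only [heq]
    rw [splineKey a b S hCS, hSd1, hSd0, hS1, hS0]
    exact halg
  constructor
  · exact ⟨S, hCS, hS0, hS1, hSd0, hSd1, hSenergy.symm⟩
  · rintro y ⟨X, hX, hX0, hX1, hXd0, hXd1, rfl⟩
    -- continuity facts
    have hX' : ContDiff ℝ 2 X := hX
    rw [show (2 : WithTop ℕ∞) = 1 + 1 from rfl, contDiff_succ_iff_deriv] at hX'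
    obtain ⟨-, -, hX2⟩ := hX'
    obtain ⟨-, hX2c⟩ := contDiff_one_iff_deriv.mp hX2
    set W : ℝ → EuclideanSpace ℝ (Fin d) := fun t => deriv (deriv X) t with hW
    set M : ℝ → EuclideanSpace ℝ (Fin d) := fun t => (2:ℝ) • a + (6*t) • b with hM
    have hWc : Continuous W := hX2c
    have hMc : Continuous M := by fun_prop
    have i1 : IntervalIntegrable (fun t => ‖W t‖ ^ 2) volume 0 1 :=
      ((hWc.norm.pow 2)).intervalIntegrable 0 1
    have i2 : IntervalIntegrable (fun t => (inner ℝ (M t) (W t) : ℝ)) volume 0 1 :=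
      (hMc.inner hWc).intervalIntegrable 0 1
    have i3 : IntervalIntegrable (fun t => ‖M t‖ ^ 2) volume 0 1 :=
      ((hMc.norm.pow 2)).intervalIntegrable 0 1
    -- the cross term equals the cost
    have hcross : (∫ t in (0:ℝ)..1, (inner ℝ (M t) (W t) : ℝ)) = splineCost x₀ x₁ v₀ v₁ := by
      have := splineKey a b X hX
      rw [hXd1, hXd0, hX1, hX0] at this
      rw [hM, hW]
      simpa using this.trans halg
    -- ∫ ‖M‖² equals the cost as well
    have hMM : (∫ t in (0:ℝ)..1, ‖M t‖ ^ 2) = splineCost x₀ x₁ v₀ v₁ := by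
      have heq : ∀ t : ℝ, ‖M t‖ ^ 2 = (inner ℝ (M t) (deriv (deriv S) t) : ℝ) := by
        intro t
        rw [hSd2 t, hM, real_inner_self_eq_norm_sq]
      simp only [heq]
      have := splineKey a b S hCS
      rw [hSd1, hSd0, hS1, hS0] at this
      rw [hM]
      simpa using this.trans halg
    have hnonneg : (0:ℝ) ≤ ∫ t in (0:ℝ)..1, ‖W t - M t‖ ^ 2 :=
      intervalIntegral.integral_nonneg (by norm_num) fun t _ => sq_nonneg _
    have hexp : ∀ t : ℝ, ‖W t - M t‖ ^ 2
        = ‖W t‖ ^ 2 - 2 * (inner ℝ (M t) (W t) : ℝ) + ‖M t‖ ^ 2 := by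
      intro t
      rw [norm_sub_sq_real, real_inner_comm]
    have hsplit : (∫ t in (0:ℝ)..1, ‖W t - M t‖ ^ 2)
        = (∫ t in (0:ℝ)..1, ‖W t‖ ^ 2) - 2 * (∫ t in (0:ℝ)..1, (inner ℝ (M t) (W t) : ℝ))
          + ∫ t in (0:ℝ)..1, ‖M t‖ ^ 2 := by
      simp only [hexp]
      rw [intervalIntegral.integral_add (i1.sub (i2.const_mul 2)) i3,
        intervalIntegral.integral_sub i1 (i2.const_mul 2),
        intervalIntegral.integral_const_mul]
    rw [hsplit, hcross, hMM] at hnonneg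
    have : (∫ t in (0:ℝ)..1, ‖W t‖ ^ 2) ≥ splineCost x₀ x₁ v₀ v₁ := by linarith
    simpa [hW] using this
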